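/- The infinite series Σ_{n=0}^{∞} 1/((n⁴ + n² + 1)·n!) converges and its sum equals e/2. -/

import Mathlib

open Filter Finset

noncomputable def auxF (n : ℕ) : ℝ := (n : ℝ) ^ 2 / (2 * ((n : ℝ) ^ 2 - n + 1) * n.factorial)

lemma aux_quad_pos (n : ℕ) : (0 : ℝ) < (n : ℝ) ^ 2 - n + 1 := by
  nlinarith [sq_nonneg ((n : ℝ) - 1)]

lemma aux_quartic_pos (n : ℕ) : (0 : ℝ) < (n : ℝ) ^ 4 + (n : ℝ) ^ 2 + 1 := by
  positivity

lemma aux_fact_pos (n : ℕ) : (0 : ℝ) < (n.factorial : ℝ) := by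
  exact_mod_cast n.factorial_pos

lemma aux_identity (n : ℕ) :
    1 / (((n : ℝ) ^ 4 + (n : ℝ) ^ 2 + 1) * (n.factorial : ℝ)) =
      1 / (2 * n.factorial) + (auxF (n + 1) - auxF n) := by
  have h1 := aux_quad_pos n
  have h2 := aux_quad_pos (n + 1)
  have h3 := aux_quartic_pos n
  have h4 := aux_fact_pos n
  have hfs : ((n + 1).factorial : ℝ) = ((n : ℝ) + 1) * n.factorial := by
    rw [Nat.factorial_succ]; push_cast; ring
  have hA : ((n : ℝ) ^ 2 - n + 1) ≠ 0 := ne_of_gt h1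
  have hB : ((n : ℝ) ^ 2 + n + 1) ≠ 0 := by positivity
  have hC : ((n : ℝ) ^ 4 + (n : ℝ) ^ 2 + 1) ≠ 0 := ne_of_gt h3
  have hF : (n.factorial : ℝ) ≠ 0 := ne_of_gt h4
  unfold auxF
  push_cast [hfs]
  have e : ((n : ℝ) + 1) ^ 2 - ((n : ℝ) + 1) + 1 = (n : ℝ) ^ 2 + n + 1 := by ring
  rw [e]
  field_simp
  have hA' : (n:ℝ) * ((n:ℝ) - 1) + 1 ≠ 0 := by nlinarith
  field_simp
  ring

lemma aux_hasSum_exp : HasSum (fun n : ℕ => 1 / (n.factorial : ℝ)) (Real.exp 1) := by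
  have h := (NormedSpace.expSeries_div_summable (1 : ℝ)).hasSum
  simp only [one_pow] at h
  have : Real.exp 1 = NormedSpace.exp (1 : ℝ) := by rw [Real.exp_eq_exp_ℝ]
  rw [this, NormedSpace.exp_eq_tsum_div]
  simp only [one_pow]
  rw [← h.tsum_eq] at h ⊢
  exact h

theorem sum_inv_quartic_factorial_eq_half_e :
    HasSum (fun n : ℕ => 1 / (((n : ℝ) ^ 4 + (n : ℝ) ^ 2 + 1) * (n.factorial : ℝ)))
      (Real.exp 1 / 2) := by
  have hfac : Summable (fun n : ℕ => 1 / (n.factorial : ℝ)) := aux_hasSum_exp.summable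
  -- the half-exp series
  have hHalf : HasSum (fun n : ℕ => 1 / (2 * (n.factorial : ℝ))) (Real.exp 1 / 2) := by
    have := aux_hasSum_exp.div_const 2
    convert this using 2 with n
    · rfl
    rw [div_div]
    ring_nf
  -- summability of the main series by comparison
  have hg : Summable (fun n : ℕ => 1 / (((n : ℝ) ^ 4 + (n : ℝ) ^ 2 + 1) * (n.factorial : ℝ))) := by
    apply Summable.of_nonneg_of_le (fun n => by positivity) _ hfac
    intro n
    apply div_le_div_of_nonneg_left (by norm_num) (aux_fact_pos n)
    calc (n.factorial : ℝ) = 1 * n.factorial := (one_mul _).symm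
    _ ≤ ((n : ℝ) ^ 4 + (n : ℝ) ^ 2 + 1) * n.factorial := by
        apply mul_le_mul_of_nonneg_right _ (aux_fact_pos n).le
        nlinarith [sq_nonneg ((n : ℝ) ^ 2), sq_nonneg (n : ℝ)]
  -- the telescoping part is summable
  have ht : Summable (fun n : ℕ => auxF (n + 1) - auxF n) := by
    have h2 : Summable (fun n : ℕ => 1 / (2 * (n.factorial : ℝ))) := hHalf.summable
    have := hg.sub h2
    apply this.congr
    intro n
    rw [aux_identity n]
    ring
  -- auxF tends to 0
  have hF0 : Filter.Tendsto auxF Filter.atTop (nhds 0) := by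
    have hub : ∀ n : ℕ, auxF n ≤ 1 / n.factorial := by
      intro n
      unfold auxF
      have h1 := aux_quad_pos n
      have h4 := aux_fact_pos n
      rw [div_le_div_iff₀ (by nlinarith) (aux_fact_pos n)]
      nlinarith [sq_nonneg ((n : ℝ) - 1)]
    have hlb : ∀ n : ℕ, 0 ≤ auxF n := by
      intro n
      unfold auxF
      have h1 := aux_quad_pos n
      positivity
    exact squeeze_zero hlb hub hfac.tendsto_atTop_zero
  -- telescoping sum is 0
  have hT0 : HasSum (fun n : ℕ => auxF (n + 1) - auxF n) 0 := by
    rw [ht.hasSum_iff_tendsto_nat]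
    have : ∀ N : ℕ, ∑ i ∈ Finset.range N, (auxF (i + 1) - auxF i) = auxF N := by
      intro N
      rw [Finset.sum_range_sub auxF]
      simp [auxF]
    simp only [this]
    exact hF0
  -- combine
  have := hHalf.add hT0
  rw [add_zero] at this
  apply this.congr_fun
  intro n
  exact aux_identity n
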